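/- Each edge is used by at most one agent in the nonconvex formulation: in any feasible point of the nonconvex formulation, Σ_{k ∈ V_agt} y_{e,k} ≤ 1 for every edge e ∈ E. -/
import Mathlib


open scoped BigOperators Classical

noncomputable section

/-- Nodes of the graph: `Sum.inl i` is the segment node `i ∈ V_seg`,
`Sum.inr false` is the depot `s`, and `Sum.inr true` is the depot copy `s'`. -/
abbrev Node (ι : Type*) := ι ⊕ Bool

variable {ι υ : Type*} [Fintype ι] [Fintype υ]

/-- The edge relation determined by the cluster assignment `cl`: from the depot `s` to
every segment node, between segment nodes in different clusters, and from every
segment node to the depot copy `s'`. -/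
def isEdge (cl : ι → υ) : Node ι → Node ι → Prop
  | Sum.inr false, Sum.inl _ => True
  | Sum.inl i, Sum.inl j => cl i ≠ cl j
  | Sum.inl _, Sum.inr true => True
  | _, _ => False

/-- The edge set `E` as a finite set of ordered pairs of nodes. -/
def edges (cl : ι → υ) : Finset (Node ι × Node ι) :=
  Finset.univ.filter fun e => isEdge cl e.1 e.2

/-- `E_i^in`: the edges of `E` entering node `i`. -/
def inE (cl : ι → υ) (i : Node ι) : Finset (Node ι × Node ι) :=
  (edges cl).filter fun e => e.2 = i

/-- `E_i^out`: the edges of `E` exiting node `i`. -/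
def outE (cl : ι → υ) (i : Node ι) : Finset (Node ι × Node ι) :=
  (edges cl).filter fun e => e.1 = i

/-- **each edge is used by at most one agent.**  For binary variables
`y_{e,k}` satisfying the flow constraints of the nonconvex formulation — at most one
departure from the depot and one arrival at its copy per agent, each cluster entered
exactly once in total, and flow conservation at every segment node — we have
`∑ k, y_{e,k} ≤ 1` for every edge `e ∈ E`. -/
theorem each_edge_used_by_at_most_one_agent
    (cl : ι → υ) (hcl : Function.Surjective cl) (m : ℕ) (hm : 1 ≤ m)
    (y : Node ι × Node ι → Fin m → ℝ)
    (hbin : ∀ e ∈ edges cl, ∀ k, y e k = 0 ∨ y e k = 1)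
    (hdepOut : ∀ k, ∑ e ∈ outE cl (Sum.inr false), y e k ≤ 1)
    (hdepIn : ∀ k, ∑ e ∈ inE cl (Sum.inr true), y e k ≤ 1)
    (hclu : ∀ u : υ, ∑ k, ∑ i ∈ Finset.univ.filter (fun i => cl i = u),
        ∑ e ∈ inE cl (Sum.inl i), y e k = 1)
    (hcons : ∀ i : ι, ∀ k,
        ∑ e ∈ inE cl (Sum.inl i), y e k = ∑ e ∈ outE cl (Sum.inl i), y e k) :
    ∀ e ∈ edges cl, ∑ k, y e k ≤ 1 := by
  intro e he
  have hnn : ∀ e' ∈ edges cl, ∀ k, 0 ≤ y e' k := by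
    intro e' he' k; rcases hbin e' he' k with h | h <;> simp [h]
  have hinE_sub : ∀ i, inE cl i ⊆ edges cl := fun i => Finset.filter_subset _ _
  have houtE_sub : ∀ i, outE cl i ⊆ edges cl := fun i => Finset.filter_subset _ _
  -- key : total inflow into any segment node is at most 1
  have key : ∀ j : ι, ∑ k, ∑ e' ∈ inE cl (Sum.inl j), y e' k ≤ 1 := by
    intro j
    rw [← hclu (cl j)]
    apply Finset.sum_le_sum
    intro k _
    apply Finset.single_le_sum (f := fun i => ∑ e' ∈ inE cl (Sum.inl i), y e' k)
    · intro i _; exact Finset.sum_nonneg fun e' he' => hnn e' (hinE_sub _ he') k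
    · simp
  obtain ⟨a, b⟩ := e
  have hedge : isEdge cl a b := (Finset.mem_filter.1 he).2
  match b with
  | Sum.inl j =>
    calc ∑ k, y (a, Sum.inl j) k
        ≤ ∑ k, ∑ e' ∈ inE cl (Sum.inl j), y e' k := by
          apply Finset.sum_le_sum; intro k _
          apply Finset.single_le_sum (f := fun e' => y e' k)
          · intro e' he'; exact hnn e' (hinE_sub _ he') k
          · exact Finset.mem_filter.2 ⟨he, rfl⟩
      _ ≤ 1 := key j
  | Sum.inr true =>
    match a with
    | Sum.inl i =>
      calc ∑ k, y (Sum.inl i, Sum.inr true) k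
          ≤ ∑ k, ∑ e' ∈ outE cl (Sum.inl i), y e' k := by
            apply Finset.sum_le_sum; intro k _
            apply Finset.single_le_sum (f := fun e' => y e' k)
            · intro e' he'; exact hnn e' (houtE_sub _ he') k
            · exact Finset.mem_filter.2 ⟨he, rfl⟩
        _ = ∑ k, ∑ e' ∈ inE cl (Sum.inl i), y e' k :=
            Finset.sum_congr rfl fun k _ => (hcons i k).symm
        _ ≤ 1 := key i
    | Sum.inr b' => exact absurd hedge (by cases b' <;> simp [isEdge])
  | Sum.inr false => exact absurd hedge (by cases a <;> simp [isEdge])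

end
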